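/- For every real q > 1, the topology on ℤ induced by the metric d_q(m,n) = ‖m−n‖_q coincides with the Fürstenberg topology. -/

import Mathlib

/-- The q-norm of an integer n: sum of 1/q^k over positive integers k not dividing n. -/
noncomputable def qnorm (q : ℝ) (n : ℤ) : ℝ :=
  ∑' k : ℕ, if 1 ≤ k ∧ ¬ ((k : ℤ) ∣ n) then 1 / q ^ k else 0

/-- The Fürstenberg topology on ℤ, generated by arithmetic progressions a + bℤ (b ≥ 1). -/
def furstenbergTopology : TopologicalSpace ℤ :=
  TopologicalSpace.generateFrom
    {S | ∃ a b : ℤ, 0 < b ∧ S = {x : ℤ | ∃ n : ℤ, x = a + b * n}}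

lemma qnorm_term_nonneg (q : ℝ) (hq : 1 < q) (n : ℤ) (k : ℕ) :
    0 ≤ (if 1 ≤ k ∧ ¬ ((k : ℤ) ∣ n) then 1 / q ^ k else 0) := by
  split <;> positivity

lemma qnorm_summable (q : ℝ) (hq : 1 < q) (n : ℤ) :
    Summable (fun k : ℕ => if 1 ≤ k ∧ ¬ ((k : ℤ) ∣ n) then 1 / q ^ k else 0) := by
  have h0 : (0:ℝ) < q := lt_trans one_pos hq
  have hr : (1/q) < 1 := by
    rw [div_lt_one h0]; exact hq
  refine Summable.of_nonneg_of_le (qnorm_term_nonneg q hq n) (fun k => ?_)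
    (summable_geometric_of_lt_one (by positivity) hr)
  split
  · rw [one_div, one_div, inv_pow]
  · positivity

lemma qnorm_lower (q : ℝ) (hq : 1 < q) (n : ℤ) (k : ℕ) (hk : 1 ≤ k)
    (hdvd : ¬ ((k : ℤ) ∣ n)) : 1 / q ^ k ≤ qnorm q n := by
  have := Summable.le_tsum (qnorm_summable q hq n) k (fun j _ => qnorm_term_nonneg q hq n j)
  rw [qnorm]
  simpa [hk, hdvd] using this

lemma qnorm_upper (q : ℝ) (hq : 1 < q) (n : ℤ) (m : ℕ)
    (hdvd : ((Nat.factorial m : ℤ)) ∣ n) :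
    qnorm q n ≤ (1/q) ^ (m+1) * (1 - 1/q)⁻¹ := by
  have h0 : (0:ℝ) < q := lt_trans one_pos hq
  have hr : (1/q) < 1 := by rw [div_lt_one h0]; exact hq
  have hr0 : (0:ℝ) ≤ 1/q := by positivity
  set g : ℕ → ℝ := fun k => if m + 1 ≤ k then (1/q)^k else 0 with hg
  have hgsum : Summable g := by
    refine Summable.of_nonneg_of_le (fun k => by dsimp [g]; split <;> positivity)
      (fun k => ?_) (summable_geometric_of_lt_one hr0 hr)
    dsimp [g]; split
    · exact le_refl _
    · positivity
  have hle : qnorm q n ≤ ∑' k, g k := by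
    rw [qnorm]
    refine Summable.tsum_le_tsum (fun k => ?_) (qnorm_summable q hq n) hgsum
    dsimp [g]
    by_cases hc : 1 ≤ k ∧ ¬ ((k : ℤ) ∣ n)
    · have hk : m + 1 ≤ k := by
        by_contra hlt
        push_neg at hlt
        have hkm : k ≤ m := Nat.lt_succ_iff.mp hlt
        have : (k : ℤ) ∣ n := dvd_trans (Int.natCast_dvd_natCast.mpr
          (Nat.dvd_factorial hc.1 hkm)) hdvd
        exact hc.2 this
      rw [if_pos hc, if_pos hk, one_div, one_div, inv_pow]
    · rw [if_neg hc]
      split <;> positivity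
  have hgval : ∑' k, g k = (1/q) ^ (m+1) * (1 - 1/q)⁻¹ := by
    have key := Summable.sum_add_tsum_nat_add (f := g) (m+1) hgsum
    have hzero : ∑ i ∈ Finset.range (m+1), g i = 0 := by
      apply Finset.sum_eq_zero
      intro i hi
      have hi' : ¬ m + 1 ≤ i := by
        simp only [Finset.mem_range] at hi; omega
      simp only [g, if_neg hi']
    have htail : ∑' i : ℕ, g (i + (m+1)) = (1/q) ^ (m+1) * (1 - 1/q)⁻¹ := by
      have : (fun i : ℕ => g (i + (m+1))) = fun i : ℕ => (1/q)^(m+1) * (1/q)^i := by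
        funext i
        have : m + 1 ≤ i + (m+1) := le_add_self
        simp only [g, if_pos this, pow_add]
        ring
      rw [this, tsum_mul_left, tsum_geometric_of_lt_one hr0 hr]
    rw [← key, hzero, htail, zero_add]
  exact hle.trans (le_of_eq hgval)

theorem stmt_8 (q : ℝ) (hq : 1 < q) (A : Set ℤ) :
    furstenbergTopology.IsOpen A ↔
      (∀ a ∈ A, ∃ ε : ℝ, 0 < ε ∧ ∀ x : ℤ, qnorm q (a - x) < ε → x ∈ A) := by
  have h0 : (0:ℝ) < q := lt_trans one_pos hq
  have hr : (1/q) < 1 := by rw [div_lt_one h0]; exact hq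
  have hr0 : (0:ℝ) ≤ 1/q := by positivity
  constructor
  · -- forward: Fürstenberg-open implies metric-open
    intro hA
    -- first show: every Fürstenberg-open set contains a progression around each point
    have key : ∀ B : Set ℤ, furstenbergTopology.IsOpen B →
        ∀ a ∈ B, ∃ b : ℤ, 0 < b ∧ {x : ℤ | ∃ n : ℤ, x = a + b * n} ⊆ B := by
      intro B hB
      induction hB with
      | basic S hS =>
          obtain ⟨a0, b, hb, rfl⟩ := hS
          intro a ha
          obtain ⟨n0, rfl⟩ := ha
          exact ⟨b, hb, fun x ⟨n, hn⟩ => ⟨n0 + n, by rw [hn]; ring⟩⟩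
      | univ => exact fun a _ => ⟨1, one_pos, fun x _ => trivial⟩
      | inter S T _ _ ihS ihT =>
          intro a ha
          obtain ⟨b1, hb1, h1⟩ := ihS a ha.1
          obtain ⟨b2, hb2, h2⟩ := ihT a ha.2
          refine ⟨b1 * b2, mul_pos hb1 hb2, fun x ⟨n, hn⟩ => ⟨?_, ?_⟩⟩
          · exact h1 ⟨b2 * n, by rw [hn]; ring⟩
          · exact h2 ⟨b1 * n, by rw [hn]; ring⟩
      | sUnion 𝒮 _ ih =>
          intro a ha
          obtain ⟨S, hS, haS⟩ := ha
          obtain ⟨b, hb, hsub⟩ := ih S hS a haS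
          exact ⟨b, hb, fun x hx => ⟨S, hS, hsub hx⟩⟩
    intro a ha
    obtain ⟨b, hb, hsub⟩ := key A hA a ha
    refine ⟨1 / q ^ (b.toNat), by positivity, fun x hx => ?_⟩
    have hbk : 1 ≤ b.toNat := by omega
    have hdvd : (b.toNat : ℤ) ∣ (a - x) := by
      by_contra hnd
      exact absurd hx (not_lt.mpr (qnorm_lower q hq (a - x) b.toNat hbk hnd))
    rw [Int.toNat_of_nonneg hb.le] at hdvd
    obtain ⟨c, hc⟩ := hdvd
    exact hsub ⟨-c, by linarith [hc]⟩
  · -- reverse: metric-open implies Fürstenberg-open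
    intro hA
    -- around each point choose a factorial progression inside A
    have key : ∀ a ∈ A, ∃ b : ℤ, 0 < b ∧ {x : ℤ | ∃ n : ℤ, x = a + b * n} ⊆ A := by
      intro a ha
      obtain ⟨ε, hε, hball⟩ := hA a ha
      have hpos : 0 < 1 - 1/q := by linarith
      obtain ⟨N, hN⟩ := exists_pow_lt_of_lt_one (mul_pos hε hpos) hr
      refine ⟨(Nat.factorial N : ℤ), by exact_mod_cast Nat.factorial_pos N, fun x ⟨n, hn⟩ => ?_⟩
      apply hball
      have hdvd : ((Nat.factorial N : ℤ)) ∣ (a - x) := ⟨-n, by rw [hn]; ring⟩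
      calc qnorm q (a - x) ≤ (1/q) ^ (N+1) * (1 - 1/q)⁻¹ := qnorm_upper q hq _ N hdvd
        _ ≤ (1/q) ^ N * (1 - 1/q)⁻¹ := by
            apply mul_le_mul_of_nonneg_right (pow_le_pow_of_le_one hr0 hr.le (by omega))
            positivity
        _ < ε := by
            rw [← div_eq_mul_inv, div_lt_iff₀ hpos]
            exact hN
    -- now A is a union of basic open progressions
    have : A = ⋃₀ {S | ∃ a ∈ A, ∃ b : ℤ, 0 < b ∧
        S = {x : ℤ | ∃ n : ℤ, x = a + b * n} ∧ S ⊆ A} := by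
      apply Set.Subset.antisymm
      · intro a ha
        obtain ⟨b, hb, hsub⟩ := key a ha
        exact ⟨_, ⟨a, ha, b, hb, rfl, hsub⟩, ⟨0, by ring⟩⟩
      · rintro x ⟨S, ⟨a, _, b, _, _, hsub⟩, hxS⟩
        exact hsub hxS
    rw [this]
    apply TopologicalSpace.GenerateOpen.sUnion
    rintro S ⟨a, _, b, hb, rfl, _⟩
    exact TopologicalSpace.GenerateOpen.basic _ ⟨a, b, hb, rfl⟩
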